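/- Let d = p^e be a prime power and c₀ ∈ ℚ̄ a Misiurewicz parameter of exact type (m, n) with m ≥ 2. Set ζ = a_{m+n−1}(c₀)/a_{m−1}(c₀) ≠ 1, a d-th root of unity, and let 0 ≤ r ≤ e−1 be the smallest nonnegative integer with ζ^{p^{r+1}} = 1. Let K = ℚ(c₀). If n does not divide m−1, then for every i ≥ 1: ⟨a_i(c₀)⟩^{p^r(p−1)d^{m−1}} = ⟨p⟩ if n | i, and ⟨a_i(c₀)⟩ = O_K if n ∤ i. -/

import Mathlib

open NumberField

set_option linter.unusedSectionVars false

section MultAPI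
variable {R : Type*} [CommRing R] [IsDomain R] [IsDedekindDomain R]

noncomputable def mq (q : Ideal R) (x : R) : ℕ := multiplicity q (Ideal.span {x})

variable {q : Ideal R}

lemma span_ne (x : R) (hx : x ≠ 0) : Ideal.span {x} ≠ (0 : Ideal R) := by
  simpa [Ideal.span_singleton_eq_bot] using hx

lemma mq_fin (hq : Prime q) (x : R) (hx : x ≠ 0) : FiniteMultiplicity q (Ideal.span {x}) :=
  FiniteMultiplicity.of_prime_left hq (span_ne x hx)

lemma le_mq_iff (hq : Prime q) {x : R} (hx : x ≠ 0) {k : ℕ} : k ≤ mq q x ↔ x ∈ q ^ k := by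
  rw [mq, ← (mq_fin hq x hx).pow_dvd_iff_le_multiplicity, Ideal.dvd_iff_le,
    Ideal.span_singleton_le_iff_mem]

lemma mq_pos_iff (hq : Prime q) {x : R} (hx : x ≠ 0) : 1 ≤ mq q x ↔ x ∈ q := by
  rw [le_mq_iff hq hx, pow_one]

lemma mq_mul (hq : Prime q) {x y : R} (hx : x ≠ 0) (hy : y ≠ 0) :
    mq q (x * y) = mq q x + mq q y := by
  rw [mq, mq, mq, ← Ideal.span_singleton_mul_span_singleton]
  exact multiplicity_mul hq
    ((FiniteMultiplicity.mul_iff hq).2 ⟨mq_fin hq x hx, mq_fin hq y hy⟩)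

lemma mq_unit (hq : Prime q) {x : R} (hx : IsUnit x) : mq q x = 0 := by
  by_contra h
  have h1 : 1 ≤ mq q x := Nat.one_le_iff_ne_zero.2 h
  rw [mq_pos_iff hq hx.ne_zero] at h1
  exact hq.not_unit (Ideal.isUnit_iff.mpr (Ideal.eq_top_of_isUnit_mem q h1 hx))

lemma mq_pow (hq : Prime q) {x : R} (hx : x ≠ 0) (k : ℕ) : mq q (x ^ k) = k * mq q x := by
  induction k with
  | zero => simpa using mq_unit hq isUnit_one
  | succ k ih => rw [pow_succ, mq_mul hq (pow_ne_zero _ hx) hx, ih]; ring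

lemma mq_neg (x : R) : mq q (-x) = mq q x := by
  unfold mq; rw [Ideal.span_singleton_neg]

lemma min_le_mq_add (hq : Prime q) {x y : R} (hx : x ≠ 0) (hy : y ≠ 0) (hxy : x + y ≠ 0) :
    min (mq q x) (mq q y) ≤ mq q (x + y) := by
  rw [le_mq_iff hq hxy]
  exact Ideal.add_mem _ ((le_mq_iff hq hx).1 (min_le_left _ _))
    ((le_mq_iff hq hy).1 (min_le_right _ _))

lemma mq_add_eq (hq : Prime q) {x y : R} (hx : x ≠ 0) (hy : y ≠ 0)
    (hlt : mq q x < mq q y) : mq q (x + y) = mq q x := by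
  have hxy : x + y ≠ 0 := by
    intro h
    rw [eq_neg_of_add_eq_zero_right h, mq_neg] at hlt
    omega
  have hub : mq q (x + y) ≤ mq q x := by
    by_contra hc
    push_neg at hc
    have hx' : x ∈ q ^ (mq q x + 1) := by
      have h1 : x + y ∈ q ^ (mq q x + 1) := (le_mq_iff hq hxy).1 hc
      have h2 : y ∈ q ^ (mq q x + 1) := (le_mq_iff hq hy).1 hlt
      have h3 := Ideal.sub_mem _ h1 h2
      simpa using h3
    have := (le_mq_iff hq hx).2 hx'
    omega
  have hlb := min_le_mq_add hq hx hy hxy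
  omega

end MultAPI

section MultAPI2
variable {R : Type*} [CommRing R] [IsDomain R] [IsDedekindDomain R]

lemma count_nf_eq_mult {q I : Ideal R} (hq : Prime q) (hI : I ≠ 0) [DecidableEq (Ideal R)] :
    Multiset.count q (UniqueFactorizationMonoid.normalizedFactors I) = multiplicity q I := by
  have fin := FiniteMultiplicity.of_prime_left hq hI
  have h1 := UniqueFactorizationMonoid.emultiplicity_eq_count_normalizedFactors
    hq.irreducible hI
  rw [fin.emultiplicity_eq_multiplicity, normalize_eq] at h1
  exact_mod_cast h1.symm

lemma ideal_eq_of_mult {I J : Ideal R} (hI : I ≠ 0) (hJ : J ≠ 0)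
    (h : ∀ q : Ideal R, Prime q → multiplicity q I = multiplicity q J) : I = J := by
  classical
  have key : UniqueFactorizationMonoid.normalizedFactors I
      = UniqueFactorizationMonoid.normalizedFactors J := by
    ext P
    by_cases hP : Prime P
    · rw [count_nf_eq_mult hP hI, count_nf_eq_mult hP hJ, h P hP]
    · rw [Multiset.count_eq_zero.2 (fun hm => hP
        (UniqueFactorizationMonoid.prime_of_normalized_factor P hm)),
        Multiset.count_eq_zero.2 (fun hm => hP
        (UniqueFactorizationMonoid.prime_of_normalized_factor P hm))]
  have e1 := UniqueFactorizationMonoid.prod_normalizedFactors hI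
  have e2 := UniqueFactorizationMonoid.prod_normalizedFactors hJ
  rw [associated_iff_eq] at e1 e2
  rw [← e1, ← e2, key]

lemma isUnit_of_mq (x : R) (hx : x ≠ 0) (h : ∀ q : Ideal R, Prime q → mq q x = 0) :
    IsUnit x := by
  by_contra hc
  have hs : Ideal.span {x} ≠ ⊤ := by
    simpa [Ideal.span_singleton_eq_top] using hc
  obtain ⟨M, hM, hle⟩ := Ideal.exists_le_maximal _ hs
  have hxM : x ∈ M := hle (Ideal.subset_span rfl)
  have hMb : M ≠ ⊥ := by
    rintro rfl
    exact hx (by simpa using hxM)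
  have hMp : Prime M := Ideal.prime_of_isPrime hMb hM.isPrime
  have := (mq_pos_iff hMp hx).2 hxM
  have := h M hMp
  omega

end MultAPI2

section MultAPI3
variable {R : Type*} [CommRing R] [IsDomain R] [IsDedekindDomain R] {q : Ideal R}

lemma mq_dvd_le (hq : Prime q) {x y : R} (hx : x ≠ 0) (hy : y ≠ 0) (hdvd : x ∣ y) :
    mq q x ≤ mq q y := by
  obtain ⟨z, rfl⟩ := hdvd
  have hz : z ≠ 0 := by rintro rfl; simp at hy
  rw [mq_mul hq hx hz]; omega

end MultAPI3

section Seq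
variable {R : Type*} [CommRing R] [IsDomain R] [IsDedekindDomain R]
variable {d : ℕ} {c : R} {a : ℕ → R} {m n : ℕ}

/-- S1 -/
lemma seq_sub_dvd (hd : 1 ≤ d) (ha0 : a 0 = 0) (haS : ∀ i, a (i + 1) = a i ^ d + c)
    {t : ℕ} (ht : 1 ≤ t) : ∀ j, 1 ≤ j → a t ^ d ∣ a (j + t) - a j := by
  intro j hj
  induction j with
  | zero => omega
  | succ j ih =>
    rcases Nat.eq_or_lt_of_le hj with h1 | h1
    · have e1 : a (1 + t) = a t ^ d + c := by rw [add_comm 1 t, haS]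
      have e2 : a 1 = c := by rw [show (1:ℕ) = 0 + 1 from rfl, haS, ha0,
        zero_pow (by omega), zero_add]
      rw [← h1, e1, e2]
      simp
    · have hj' : 1 ≤ j := by omega
      have ihj := ih hj'
      have e1 : a (j + 1 + t) = a (j + t) ^ d + c := by
        rw [show j + 1 + t = (j + t) + 1 by ring, haS]
      rw [e1, haS j]
      have : a (j + t) ^ d + c - (a j ^ d + c) = a (j + t) ^ d - a j ^ d := by ring
      rw [this]
      exact dvd_trans ihj (sub_dvd_pow_sub_pow _ _ d)

/-- S2 -/
lemma seq_per (haS : ∀ i, a (i + 1) = a i ^ d + c) (hper : a (m + n) = a m) :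
    ∀ j, m ≤ j → a (j + n) = a j := by
  have key : ∀ k, a (m + k + n) = a (m + k) := by
    intro k
    induction k with
    | zero => simpa using hper
    | succ k ih =>
      have e1 : a (m + (k+1) + n) = a (m + k + n) ^ d + c := by
        rw [show m + (k+1) + n = (m + k + n) + 1 by ring, haS]
      rw [e1, ih, show m + (k+1) = (m + k) + 1 by ring, haS]
  intro j hj
  have : j = m + (j - m) := by omega
  rw [this]; exact key (j - m)

/-- S3 -/
lemma seq_per_mul (haS : ∀ i, a (i + 1) = a i ^ d + c) (hper : a (m + n) = a m) :
    ∀ j, m ≤ j → ∀ K, a (j + K * n) = a j := by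
  intro j hj K
  induction K with
  | zero => simp
  | succ K ih =>
    rw [show j + (K+1) * n = (j + K * n) + n by ring,
      seq_per haS hper _ (by omega), ih]

/-- S5 -/
lemma seq_ne (hm : 1 ≤ m) (ha0 : a 0 = 0)
    (hmmin : ∀ m', m' < m → ∀ k, 0 < k → a (m' + k) ≠ a m') :
    ∀ j, 1 ≤ j → a j ≠ 0 := by
  intro j hj
  have := hmmin 0 (by omega) j (by omega)
  simpa [ha0] using this

/-- S6 -/
lemma seq_eq_imp_dvd (haS : ∀ i, a (i + 1) = a i ^ d + c) (hper : a (m + n) = a m)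
    (hn : 1 ≤ n) (hnmin : ∀ k, 0 < k → k < n → a (m + k) ≠ a m)
    {t j : ℕ} (ht : 1 ≤ t) (hj : 1 ≤ j) (heq : a (j + t) = a j) : n ∣ t := by
  -- propagate
  have hprop : ∀ j', j ≤ j' → a (j' + t) = a j' := by
    intro j' hj'
    induction j' with
    | zero => omega
    | succ j' ih =>
      rcases Nat.eq_or_lt_of_le hj' with h1 | h1
      · rwa [← h1]
      · have h2 := ih (by omega)
        rw [show j' + 1 + t = (j' + t) + 1 by ring, haS, h2, haS]
  have hX : m ≤ m + j * n := by omega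
  have h1 : a (m + j * n + t) = a (m + j * n) := by
    apply hprop
    calc j ≤ j * n := Nat.le_mul_of_pos_right j (by omega)
    _ ≤ m + j * n := by omega
  have h2 : a (m + j * n) = a m := seq_per_mul haS hper m le_rfl j
  have h3 : a (m + j * n + t) = a (m + t) := by
    rw [show m + j * n + t = (m + t) + j * n by ring]
    exact seq_per_mul haS hper (m + t) (by omega) j
  have hmt : a (m + t) = a m := by rw [← h3, h1, h2]
  by_contra hnd
  have hs : 0 < t % n ∧ t % n < n := by
    constructor
    · rcases Nat.eq_zero_or_pos (t % n) with h | h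
      · exact absurd (Nat.dvd_of_mod_eq_zero h) hnd
      · exact h
    · exact Nat.mod_lt _ (by omega)
  have h4 : a (m + t) = a (m + t % n) := by
    have : m + t = (m + t % n) + (t / n) * n := by
      have := Nat.mod_add_div' t n
      omega
    rw [this]
    exact seq_per_mul haS hper _ (by omega) _
  exact hnmin (t % n) hs.1 hs.2 (by rw [← h4, hmt])

/-- S7a -/
lemma seq_mem_diff (hd : 1 ≤ d) (ha0 : a 0 = 0) (haS : ∀ i, a (i + 1) = a i ^ d + c)
    {q : Ideal R} {t : ℕ} (ht : 1 ≤ t) (hta : a t ∈ q) :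
    ∀ j, 1 ≤ j → a (j + t) - a j ∈ q := by
  intro j hj
  obtain ⟨z, hz⟩ := seq_sub_dvd hd ha0 haS ht j hj
  rw [hz]
  apply Ideal.mul_mem_right
  have : a t ^ d = a t * a t ^ (d - 1) := by
    rw [← pow_succ']; congr 1; omega
  rw [this]
  exact Ideal.mul_mem_right _ _ hta

/-- S7b -/
lemma seq_mem_mul (hd : 1 ≤ d) (ha0 : a 0 = 0) (haS : ∀ i, a (i + 1) = a i ^ d + c)
    {q : Ideal R} {t : ℕ} (ht : 1 ≤ t) (hta : a t ∈ q) :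
    ∀ K, 1 ≤ K → a (K * t) ∈ q := by
  intro K hK
  induction K with
  | zero => omega
  | succ K ih =>
    rcases Nat.eq_or_lt_of_le hK with h1 | h1
    · rw [← h1]; simpa using hta
    · have h2 := ih (by omega)
      have h3 := seq_mem_diff hd ha0 haS ht hta (K * t) (Nat.mul_pos (by omega) (by omega))
      have : a ((K+1) * t) = (a (K * t + t) - a (K * t)) + a (K * t) := by
        rw [show (K+1) * t = K * t + t by ring]; ring
      rw [this]
      exact Ideal.add_mem _ h3 h2

end Seq

section Growth
variable {R : Type*} [CommRing R] [IsDomain R] [IsDedekindDomain R]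
variable {d : ℕ} {c : R} {a : ℕ → R} {m n : ℕ}

/-- Lemma C: no prime contains `a t` when `n ∤ t`. -/
lemma no_prime_outside (hd : 2 ≤ d) (ha0 : a 0 = 0) (haS : ∀ i, a (i + 1) = a i ^ d + c)
    (hm : 2 ≤ m) (hn : 1 ≤ n) (hper : a (m + n) = a m)
    (hnmin : ∀ k, 0 < k → k < n → a (m + k) ≠ a m)
    (hmmin : ∀ m', m' < m → ∀ k, 0 < k → a (m' + k) ≠ a m')
    {q : Ideal R} (hq : Prime q) {t : ℕ} (ht : 1 ≤ t) (hnt : ¬ n ∣ t)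
    (hta : a t ∈ q) : False := by
  set b : ℕ → R := fun j => a (j + t) - a j with hb
  have hbne : ∀ j, 1 ≤ j → b j ≠ 0 := by
    intro j hj hbj
    exact hnt (seq_eq_imp_dvd haS hper hn hnmin ht hj (by
      have := sub_eq_zero.1 hbj; exact this))
  have hSfac : ∀ j, b (j + 1) =
      (∑ i ∈ Finset.range d, a (j + t) ^ i * a j ^ (d - 1 - i)) * b j := by
    intro j
    have e1 : b (j + 1) = a (j + t) ^ d - a j ^ d := by
      simp only [hb]
      rw [show j + 1 + t = (j + t) + 1 by ring, haS, haS]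
      ring
    rw [e1, hb]
    exact (geom_sum₂_mul (a (j + t)) (a j) d).symm
  have hmono : ∀ j, 1 ≤ j → ∀ j', j ≤ j' → mq q (b j) ≤ mq q (b j') := by
    intro j hj j' hj'
    induction j' with
    | zero => omega
    | succ j' ih =>
      rcases Nat.eq_or_lt_of_le hj' with h1 | h1
      · rw [h1]
      · have h2 := ih (by omega)
        have hb' : b (j' + 1) ≠ 0 := hbne _ (by omega)
        have hS : (∑ i ∈ Finset.range d, a (j' + t) ^ i * a j' ^ (d - 1 - i)) ≠ 0 := by
          intro h0
          rw [hSfac j', h0, zero_mul] at hb'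
          exact hb' rfl
        rw [hSfac j', mq_mul hq hS (hbne j' (by omega))]
        omega
  have hjump : ∀ K, 1 ≤ K → mq q (b (K * t)) + 1 ≤ mq q (b (K * t + 1)) := by
    intro K hK
    have hKt : 1 ≤ K * t := Nat.mul_pos (by omega) (by omega)
    have hb1 : b (K * t + 1) ≠ 0 := hbne _ (by omega)
    have hS : (∑ i ∈ Finset.range d, a (K * t + t) ^ i * a (K * t) ^ (d - 1 - i)) ≠ 0 := by
      intro h0
      rw [hSfac (K * t), h0, zero_mul] at hb1
      exact hb1 rfl
    have hSmem : (∑ i ∈ Finset.range d, a (K * t + t) ^ i * a (K * t) ^ (d - 1 - i)) ∈ q := by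
      apply Ideal.sum_mem
      intro i hi
      rcases Nat.eq_zero_or_pos i with h0 | h0
      · subst h0
        have h1 : a (K * t) ∈ q := seq_mem_mul (by omega) ha0 haS ht hta K hK
        have h2 : a (K * t) ^ (d - 1 - 0) = a (K * t) * a (K * t) ^ (d - 2) := by
          rw [← pow_succ']; congr 1; omega
        simp only [pow_zero, one_mul, h2]
        exact Ideal.mul_mem_right _ _ h1
      · have h1 : a (K * t + t) ∈ q := by
          have := seq_mem_mul (by omega) ha0 haS ht hta (K + 1) (by omega)
          rwa [show (K + 1) * t = K * t + t by ring] at this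
        have h2 : a (K * t + t) ^ i = a (K * t + t) * a (K * t + t) ^ (i - 1) := by
          rw [← pow_succ']; congr 1; omega
        rw [h2, mul_assoc]
        exact Ideal.mul_mem_right _ _ h1
    have h3 : 1 ≤ mq q (∑ i ∈ Finset.range d, a (K * t + t) ^ i * a (K * t) ^ (d - 1 - i)) :=
      (mq_pos_iff hq hS).2 hSmem
    rw [hSfac (K * t), mq_mul hq hS (hbne _ (by omega))]
    omega
  have hgrow : ∀ K, K ≤ mq q (b (K * t + 1)) := by
    intro K
    induction K with
    | zero => omega
    | succ K ih =>
      have h1 := hjump (K + 1) (by omega)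
      have h2 := hmono (K * t + 1) (by omega) ((K + 1) * t) (by nlinarith)
      omega
  -- boundedness
  have hred : ∀ j, m ≤ j → b j = b (m + (j - m) % n) := by
    intro j hj
    set s := (j - m) % n with hs
    obtain ⟨Kq, hKq⟩ : ∃ Kq, j - m = s + Kq * n :=
      ⟨(j - m) / n, by rw [hs, Nat.mod_add_div']⟩
    have hidx : j = (m + s) + Kq * n := by omega
    have h1 : a j = a (m + s) := by
      conv_lhs => rw [hidx]
      exact seq_per_mul haS hper (m + s) (by omega) Kq
    have h2 : a (j + t) = a (m + s + t) := by
      conv_lhs => rw [hidx, show m + s + Kq * n + t = (m + s + t) + Kq * n by ring]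
      exact seq_per_mul haS hper (m + s + t) (by omega) Kq
    simp only [hb, h1, h2]
  set M : ℕ := (Finset.range n).sup (fun s => mq q (b (m + s))) with hM
  have hbound : ∀ j, m ≤ j → mq q (b j) ≤ M := by
    intro j hj
    rw [hred j hj]
    exact Finset.le_sup (f := fun s => mq q (b (m + s))) (Finset.mem_range.2 (Nat.mod_lt (j - m) (show 0 < n by omega)))
  have hKbig := hgrow (M + m + 1)
  have hge : m ≤ (M + m + 1) * t + 1 := by nlinarith
  have := hbound ((M + m + 1) * t + 1) hge
  omega

end Growth

section MinIdx
variable {R : Type*} [CommRing R] [IsDomain R] [IsDedekindDomain R]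
variable {d : ℕ} {c : R} {a : ℕ → R} {m n : ℕ}

/-- Lemma D: if a prime contains some `a i`, it contains `a n`. -/
lemma mem_imp_an (hd : 2 ≤ d) (ha0 : a 0 = 0) (haS : ∀ i, a (i + 1) = a i ^ d + c)
    (hm : 2 ≤ m) (hn : 1 ≤ n) (hper : a (m + n) = a m)
    (hnmin : ∀ k, 0 < k → k < n → a (m + k) ≠ a m)
    (hmmin : ∀ m', m' < m → ∀ k, 0 < k → a (m' + k) ≠ a m')
    {q : Ideal R} (hq : Prime q) {i : ℕ} (hi : 1 ≤ i) (hai : a i ∈ q) : a n ∈ q := by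
  classical
  have hex : ∃ j, 1 ≤ j ∧ a j ∈ q := ⟨i, hi, hai⟩
  set i0 := Nat.find hex with hi0
  obtain ⟨hi01, hi0mem⟩ := Nat.find_spec hex
  have hmin : ∀ j, j < i0 → ¬ (1 ≤ j ∧ a j ∈ q) := fun j hj => Nat.find_min hex hj
  have hdvdall : ∀ j, 1 ≤ j → a j ∈ q → i0 ∣ j := by
    intro j
    induction j using Nat.strong_induction_on with
    | _ j ih =>
      intro hj1 hjmem
      rcases lt_trichotomy j i0 with h | h | h
      · exact absurd ⟨hj1, hjmem⟩ (hmin j h)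
      · rw [h]
      · have hsub : a (j - i0) ∈ q := by
          have hdiff := seq_mem_diff (by omega) ha0 haS hi01 hi0mem (j - i0) (by omega)
          rw [show j - i0 + i0 = j by omega] at hdiff
          have : a (j - i0) = a j - (a j - a (j - i0)) := by ring
          rw [this]
          exact Ideal.sub_mem _ hjmem hdiff
        obtain ⟨w, hw⟩ := ih (j - i0) (by omega) (by omega) hsub
        exact ⟨w + 1, by rw [Nat.mul_add, mul_one]; omega⟩
  have hni0 : n ∣ i0 := by
    by_contra hc
    exact no_prime_outside hd ha0 haS hm hn hper hnmin hmmin hq hi01 hc hi0mem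
  -- X := (m+1) * i0
  have hX1 : a ((m + 1) * i0) ∈ q := seq_mem_mul (by omega) ha0 haS hi01 hi0mem (m + 1) (by omega)
  have hXge : m ≤ (m + 1) * i0 := by nlinarith
  have hX2 : a ((m + 1) * i0 + n) ∈ q := by
    rw [seq_per haS hper _ hXge]; exact hX1
  have h3 : i0 ∣ (m + 1) * i0 + n := hdvdall _ (by omega) hX2
  have h4 : i0 ∣ n := (Nat.dvd_add_right (dvd_mul_left i0 (m+1))).1 h3
  have h5 : i0 = n := Nat.dvd_antisymm h4 hni0
  rw [← h5]; exact hi0mem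

/-- valuations of `a (K*n)` all equal that of `a n`. -/
lemma mq_multiple (hd : 2 ≤ d) (ha0 : a 0 = 0) (haS : ∀ i, a (i + 1) = a i ^ d + c)
    (hm : 2 ≤ m) (hn : 1 ≤ n) (hper : a (m + n) = a m)
    (hnmin : ∀ k, 0 < k → k < n → a (m + k) ≠ a m)
    (hmmin : ∀ m', m' < m → ∀ k, 0 < k → a (m' + k) ≠ a m')
    {q : Ideal R} (hq : Prime q) {K : ℕ} (hK : 1 ≤ K) :
    mq q (a (K * n)) = mq q (a n) := by
  have hane : ∀ j, 1 ≤ j → a j ≠ 0 := seq_ne (by omega) ha0 hmmin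
  rcases Nat.eq_zero_or_pos (mq q (a n)) with h0 | hpos
  · rw [h0]
    by_contra hc
    have h1 : 1 ≤ mq q (a (K * n)) := by omega
    have h2 := (mq_pos_iff hq (hane _ (Nat.mul_pos (by omega) (by omega)))).1 h1
    have h3 := mem_imp_an hd ha0 haS hm hn hper hnmin hmmin hq
      (i := K * n) (Nat.mul_pos (by omega) (by omega)) h2
    have := (mq_pos_iff hq (hane n hn)).2 h3
    omega
  · induction K with
    | zero => omega
    | succ K ih =>
      rcases Nat.eq_or_lt_of_le hK with h1 | h1
      · rw [← h1, one_mul]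
      · have hKK : 1 ≤ K := by omega
        have ihK := ih hKK
        by_cases hdz : a ((K+1) * n) - a (K * n) = 0
        · rw [show (K+1) * n = K * n + n by ring] at hdz ⊢
          rw [sub_eq_zero.1 hdz, ihK]
        · have hdvd : a n ^ d ∣ a ((K+1) * n) - a (K * n) := by
            have := seq_sub_dvd (by omega) ha0 haS hn (K * n)
              (Nat.mul_pos (by omega) (by omega))
            rwa [show K * n + n = (K+1) * n by ring] at this
          have hdm : mq q (a n ^ d) ≤ mq q (a ((K+1) * n) - a (K * n)) :=
            mq_dvd_le hq (pow_ne_zero _ (hane n hn)) hdz hdvd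
          rw [mq_pow hq (hane n hn)] at hdm
          have hlt : mq q (a (K * n)) < mq q (a ((K+1) * n) - a (K * n)) := by
            rw [ihK]; nlinarith
          have heq : a ((K+1) * n) = a (K * n) + (a ((K+1) * n) - a (K * n)) := by ring
          rw [heq, mq_add_eq hq (hane _ (Nat.mul_pos (by omega) (by omega))) hdz hlt, ihK]

end MinIdx

section Bin
variable {R : Type*} [CommRing R]

lemma bin_factor {p e : ℕ} (hp : p.Prime) (x y : R) :
    ∃ Y : R, (x + y) ^ p ^ e = y ^ p ^ e + x ^ p ^ e + x * ((p : R) * Y) := by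
  refine ⟨∑ k ∈ Finset.Ioo 0 (p ^ e), x ^ (k - 1) * y ^ (p ^ e - k) * ↑((p ^ e).choose k / p), ?_⟩
  rw [(Commute.all x y).add_pow_prime_pow_eq' hp e]
  have : x * ((p:R) * ∑ k ∈ Finset.Ioo 0 (p ^ e),
      x ^ (k - 1) * y ^ (p ^ e - k) * ↑((p ^ e).choose k / p))
      = (p:R) * ∑ k ∈ Finset.Ioo 0 (p ^ e),
      x ^ k * y ^ (p ^ e - k) * ↑((p ^ e).choose k / p) := by
    rw [Finset.mul_sum, Finset.mul_sum, Finset.mul_sum]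
    rw [← Finset.sum_attach (Finset.Ioo 0 (p ^ e)), ← Finset.sum_attach (Finset.Ioo 0 (p ^ e))
      (fun k => (p:R) * (x ^ k * y ^ (p ^ e - k) * ↑((p ^ e).choose k / p)))]
    apply Finset.sum_congr rfl
    intro k _
    have hk1 : 1 ≤ (k : ℕ) := by
      have := k.2; rw [Finset.mem_Ioo] at this; omega
    have : x ^ (k:ℕ) = x * x ^ ((k:ℕ) - 1) := by
      rw [← pow_succ']; congr 1; omega
    rw [this]; ring
  rw [this]; ring

end Bin

section Chain
variable {R : Type*} [CommRing R] [IsDomain R] [IsDedekindDomain R]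
variable {d : ℕ} {c : R} {a : ℕ → R} {m n : ℕ}

/-- Lemma E: per-prime valuation identity `mq q (a n) * d^(m-1) = mq q z`. -/
lemma chain_eq {p e : ℕ} (hp : p.Prime) (he : 1 ≤ e) (hd : d = p ^ e)
    (ha0 : a 0 = 0) (haS : ∀ i, a (i + 1) = a i ^ d + c)
    (hm : 2 ≤ m) (hn : 1 ≤ n) (hper : a (m + n) = a m)
    (hnmin : ∀ k, 0 < k → k < n → a (m + k) ≠ a m)
    (hmmin : ∀ m', m' < m → ∀ k, 0 < k → a (m' + k) ≠ a m')
    (hndvd : ¬ n ∣ m - 1)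
    {q : Ideal R} (hq : Prime q) {z : R} (hz0 : z ≠ 0)
    (hzb : a ((m - 1) + n) - a (m - 1) = z * a (m - 1))
    (hpR : (p : R) ≠ 0) {φ : ℕ} (hφ : 1 ≤ φ) (hVw : mq q ((p : R)) = φ * mq q z) :
    mq q (a n) * d ^ (m - 1) = mq q z := by
  have hd2 : 2 ≤ d := by
    rw [hd]
    calc 2 ≤ p := hp.two_le
    _ = p ^ 1 := (pow_one p).symm
    _ ≤ p ^ e := Nat.pow_le_pow_right hp.pos he
  have hane : ∀ j, 1 ≤ j → a j ≠ 0 := seq_ne (by omega) ha0 hmmin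
  set μ := m - 1 with hμdef
  have hμ : 1 ≤ μ := by omega
  set b : ℕ → R := fun j => a (j + n) - a j with hb
  have hbne : ∀ j, 1 ≤ j → j ≤ μ → b j ≠ 0 := by
    intro j hj1 hjμ hbj
    exact hmmin j (by omega) n (by omega) (sub_eq_zero.1 hbj)
  set α := mq q (a n) with hα
  set w := mq q z with hw
  set V := mq q ((p : R)) with hV
  -- b 1 = a n ^ d
  have hb1 : b 1 = a n ^ d := by
    have e1 : a (1 + n) = a n ^ d + c := by rw [add_comm 1 n, haS]
    have e2 : a 1 = c := by rw [show (1:ℕ) = 0 + 1 from rfl, haS, ha0,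
      zero_pow (by omega), zero_add]
    simp only [hb, e1, e2]; ring
  have hβ1 : mq q (b 1) = d * α := by rw [hb1, mq_pow hq (hane n hn)]
  -- a μ has valuation 0
  have haμ0 : mq q (a μ) = 0 := by
    by_contra hc
    have h1 : 1 ≤ mq q (a μ) := by omega
    have h2 := (mq_pos_iff hq (hane μ hμ)).1 h1
    exact no_prime_outside hd2 ha0 haS hm hn hper hnmin hmmin hq hμ hndvd h2
  have hβμ : mq q (b μ) = w := by
    have : b μ = z * a μ := hzb
    rw [this, mq_mul hq hz0 (hane μ hμ), haμ0, add_zero, ← hw]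
  -- binomial step decomposition
  have hstep : ∀ j, 1 ≤ j → ∃ Y : R, b (j + 1) = b j ^ d + b j * ((p : R) * Y) := by
    intro j hj
    obtain ⟨Y, hY⟩ := bin_factor (e := e) hp (b j) (a j)
    refine ⟨Y, ?_⟩
    have e1 : b (j + 1) = a (j + n) ^ d - a j ^ d := by
      simp only [hb]
      rw [show j + 1 + n = (j + n) + 1 by ring, haS, haS]
      ring
    have e2 : a (j + n) = b j + a j := by simp only [hb]; ring
    rw [e1, e2, ← hd] at *
    rw [hY]; ring
  -- monotonicity via geometric factorization
  have hmono : ∀ j, 1 ≤ j → ∀ j', j ≤ j' → j' ≤ μ → mq q (b j) ≤ mq q (b j') := by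
    intro j hj j' hj' hj'μ
    induction j' with
    | zero => omega
    | succ j' ih =>
      rcases Nat.eq_or_lt_of_le hj' with h1 | h1
      · rw [h1]
      · have h2 := ih (by omega) (by omega)
        have hSfac : b (j' + 1) =
            (∑ i ∈ Finset.range d, a (j' + n) ^ i * a j' ^ (d - 1 - i)) * b j' := by
          have e1 : b (j' + 1) = a (j' + n) ^ d - a j' ^ d := by
            simp only [hb]
            rw [show j' + 1 + n = (j' + n) + 1 by ring, haS, haS]
            ring
          rw [e1, hb]
          exact (geom_sum₂_mul (a (j' + n)) (a j') d).symm
        have hb' : b (j' + 1) ≠ 0 := hbne _ (by omega) (by omega)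
        have hS : (∑ i ∈ Finset.range d, a (j' + n) ^ i * a j' ^ (d - 1 - i)) ≠ 0 := by
          intro h0; rw [hSfac, h0, zero_mul] at hb'; exact hb' rfl
        rw [hSfac, mq_mul hq hS (hbne j' (by omega) (by omega))]
        omega
  -- case w = 0
  rcases Nat.eq_zero_or_pos w with hw0 | hw1
  · have hα0 : α = 0 := by
      by_contra hc
      have h1 : 1 ≤ α := by omega
      have h2 : mq q (b 1) ≤ mq q (b μ) := hmono 1 le_rfl μ hμ le_rfl
      rw [hβ1, hβμ, hw0] at h2
      nlinarith
    simp [hα0, hw0]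
  · -- w ≥ 1 : first α ≥ 1
    have hVge : w ≤ V := by
      rw [hVw]; nlinarith
    have hα1 : 1 ≤ α := by
      by_contra hc
      have hα0 : α = 0 := by omega
      have hzero : ∀ j, 1 ≤ j → j ≤ μ → mq q (b j) = 0 := by
        intro j hj1 hjμ
        induction j with
        | zero => omega
        | succ j ih =>
          rcases Nat.eq_or_lt_of_le hj1 with h1 | h1
          · rw [← h1] at hjμ ⊢
            rw [hβ1, hα0]; ring
          · have hprev := ih (by omega) (by omega)
            obtain ⟨Y, hY⟩ := hstep j (by omega)
            have ht1 : mq q (b j ^ d) = 0 := by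
              rw [mq_pow hq (hbne j (by omega) (by omega)), hprev]; ring
            by_cases ht2 : b j * ((p : R) * Y) = 0
            · rw [hY, ht2, add_zero, ht1]
            · have hYne : Y ≠ 0 := by
                intro h0; rw [h0, mul_zero, mul_zero] at ht2; exact ht2 rfl
              have ht2v : mq q (b j * ((p : R) * Y)) =
                  mq q (b j) + (V + mq q Y) := by
                rw [mq_mul hq (hbne j (by omega) (by omega)) (mul_ne_zero hpR hYne),
                  mq_mul hq hpR hYne, hV]
              have hlt : mq q (b j ^ d) < mq q (b j * ((p : R) * Y)) := by
                rw [ht1, ht2v]; omega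
              rw [hY, mq_add_eq hq (pow_ne_zero _ (hbne j (by omega) (by omega))) ht2 hlt, ht1]
      have := hzero μ hμ le_rfl
      rw [hβμ] at this
      omega
    -- main induction: β j = d^j * α
    have hβall : ∀ j, 1 ≤ j → j ≤ μ → mq q (b j) = d ^ j * α := by
      intro j hj1 hjμ
      induction j with
      | zero => omega
      | succ j ih =>
        rcases Nat.eq_or_lt_of_le hj1 with h1 | h1
        · rw [← h1] at hjμ ⊢
          rw [hβ1, pow_one]
        · have hprev := ih (by omega) (by omega)
          obtain ⟨Y, hY⟩ := hstep j (by omega)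
          have hbj := hbne j (by omega) (by omega)
          have hbj1 := hbne (j + 1) (by omega) hjμ
          have ht1 : mq q (b j ^ d) = d ^ (j + 1) * α := by
            rw [mq_pow hq hbj, hprev, pow_succ]; ring
          by_cases ht2 : b j * ((p : R) * Y) = 0
          · rw [hY, ht2, add_zero, ht1]
          · have hYne : Y ≠ 0 := by
              intro h0; rw [h0, mul_zero, mul_zero] at ht2; exact ht2 rfl
            have ht2v : mq q (b j * ((p : R) * Y)) = mq q (b j) + (V + mq q Y) := by
              rw [mq_mul hq hbj (mul_ne_zero hpR hYne), mq_mul hq hpR hYne, hV]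
            by_cases hcmp : mq q (b j ^ d) < mq q (b j * ((p : R) * Y))
            · rw [hY, mq_add_eq hq (pow_ne_zero _ hbj) ht2 hcmp, ht1]
            · -- contradiction case
              exfalso
              push_neg at hcmp
              have hmin : min (mq q (b j ^ d)) (mq q (b j * ((p : R) * Y)))
                  ≤ mq q (b (j + 1)) := by
                rw [hY]
                exact min_le_mq_add hq (pow_ne_zero _ hbj) ht2 (by rw [← hY]; exact hbj1)
              have hub : mq q (b (j + 1)) ≤ w := by
                have := hmono (j + 1) (by omega) μ hjμ le_rfl
                rw [hβμ] at this; exact this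
              have hlb : mq q (b j) + V ≤ mq q (b (j + 1)) := by
                have h5 : mq q (b j * ((p : R) * Y)) ≤ mq q (b (j+1)) := by
                  rw [min_eq_right hcmp] at hmin; exact hmin
                rw [ht2v] at h5; omega
              have hβjpos : 1 ≤ mq q (b j) := by rw [hprev]; exact Nat.mul_pos (Nat.pow_pos (by omega)) hα1
              omega
    have := hβall μ hμ le_rfl
    rw [hβμ] at this
    rw [this]; ring

end Chain

section Cyclo
variable {R : Type*} [CommRing R] [IsDomain R]

lemma primroot_of_order {p r : ℕ} (hp : p.Prime) {ζ : R} (hζ1 : ζ ≠ 1)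
    (hζr : ζ ^ p ^ (r + 1) = 1) (hrmin : ∀ r', r' < r → ζ ^ p ^ (r' + 1) ≠ 1) :
    IsPrimitiveRoot ζ (p ^ (r + 1)) := by
  have hord : orderOf ζ ∣ p ^ (r + 1) := orderOf_dvd_of_pow_eq_one hζr
  obtain ⟨s, hs, hords⟩ := (Nat.dvd_prime_pow hp).1 hord
  have hsr : s = r + 1 := by
    by_contra hc
    have hs' : s ≤ r := by omega
    have h1 : ζ ^ p ^ r = 1 := by
      apply orderOf_dvd_iff_pow_eq_one.1
      rw [hords]
      exact pow_dvd_pow p hs'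
    rcases Nat.eq_zero_or_pos r with h0 | h0
    · rw [h0, pow_zero, pow_one] at h1
      exact hζ1 h1
    · exact hrmin (r - 1) (by omega) (by rwa [show r - 1 + 1 = r by omega])
  rw [hsr] at hords
  rw [← hords]
  exact IsPrimitiveRoot.orderOf ζ

lemma sub_one_dvd_sub_one {N : ℕ} [NeZero N] {ζ μ : R} (h : IsPrimitiveRoot ζ N)
    (hμ : μ ^ N = 1) : (1 - ζ) ∣ (1 - μ) := by
  obtain ⟨i, _, hi⟩ := h.eq_pow_of_pow_eq_one hμ
  have := sub_dvd_pow_sub_pow (1 : R) ζ i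
  rwa [one_pow, hi] at this

lemma assoc_pow_totient {p r : ℕ} (hp : p.Prime) {ζ : R}
    (h : IsPrimitiveRoot ζ (p ^ (r + 1))) :
    Associated ((1 - ζ) ^ (p ^ (r + 1)).totient) ((p : R)) := by
  haveI : Fact p.Prime := ⟨hp⟩
  haveI : NeZero (p ^ (r + 1)) := ⟨pow_ne_zero _ hp.ne_zero⟩
  have hcy := Polynomial.cyclotomic_eq_prod_X_sub_primitiveRoots h
  have hev : (p : R) = ∏ μ ∈ primitiveRoots (p ^ (r + 1)) R, (1 - μ) := by
    have := congrArg (Polynomial.eval 1) hcy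
    rw [Polynomial.eval_one_cyclotomic_prime_pow, Polynomial.eval_prod] at this
    simpa using this
  have hassoc : Associated (∏ μ ∈ primitiveRoots (p ^ (r + 1)) R, (1 - μ))
      (∏ _μ ∈ primitiveRoots (p ^ (r + 1)) R, (1 - ζ)) := by
    apply Associated.prod
    intro μ hμmem
    have hμ : IsPrimitiveRoot μ (p ^ (r + 1)) :=
      (mem_primitiveRoots (Nat.pos_of_ne_zero (NeZero.ne _))).1 hμmem
    exact associated_of_dvd_dvd (sub_one_dvd_sub_one hμ h.pow_eq_one)
      (sub_one_dvd_sub_one h hμ.pow_eq_one)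
  rw [Finset.prod_const, h.card_primitiveRoots] at hassoc
  rw [← hev] at hassoc
  exact hassoc.symm

end Cyclo

/-- d = p^e, c₀ a Misiurewicz parameter of exact type (m,n),
m ≥ 2, ζ = a_{m+n−1}/a_{m−1} ≠ 1 a d-th root of unity, r minimal with
ζ^{p^{r+1}} = 1. If n ∤ m−1, then for i ≥ 1:
⟨a_i⟩^{p^r(p−1)d^{m−1}} = ⟨p⟩ if n ∣ i, and ⟨a_i⟩ = O_K if n ∤ i. -/
theorem stmt11 (p e : ℕ) (hp : p.Prime) (he : 1 ≤ e) (d : ℕ) (hd : d = p ^ e)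
    (K : Type*) [Field K] [NumberField K]
    (c₀ : 𝓞 K) (hK : Algebra.adjoin ℚ {algebraMap (𝓞 K) K c₀} = ⊤)
    (a : ℕ → 𝓞 K) (ha0 : a 0 = 0) (haS : ∀ i, a (i + 1) = a i ^ d + c₀)
    (m n : ℕ) (hm : 2 ≤ m) (hn : 1 ≤ n)
    (hper : a (m + n) = a m)
    (hnmin : ∀ k, 0 < k → k < n → a (m + k) ≠ a m)
    (hmmin : ∀ m', m' < m → ∀ k, 0 < k → a (m' + k) ≠ a m')
    (ζ : 𝓞 K) (hζ : a (m + n - 1) = ζ * a (m - 1)) (hζd : ζ ^ d = 1)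
    (hζ1 : ζ ≠ 1)
    (r : ℕ) (hr : r ≤ e - 1) (hζr : ζ ^ p ^ (r + 1) = 1)
    (hrmin : ∀ r', r' < r → ζ ^ p ^ (r' + 1) ≠ 1)
    (hndvd : ¬ n ∣ m - 1) :
    ∀ i, 1 ≤ i →
      (n ∣ i → (Ideal.span {a i}) ^ (p ^ r * (p - 1) * d ^ (m - 1)) =
        Ideal.span {(p : 𝓞 K)}) ∧
      (¬ n ∣ i → Ideal.span {a i} = (⊤ : Ideal (𝓞 K))) := by
  have hd2 : 2 ≤ d := by
    rw [hd]
    calc 2 ≤ p := hp.two_le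
    _ = p ^ 1 := (pow_one p).symm
    _ ≤ p ^ e := Nat.pow_le_pow_right hp.pos he
  have hane : ∀ j, 1 ≤ j → a j ≠ 0 := seq_ne (m := m) (by omega) ha0 hmmin
  have hz0 : ζ - 1 ≠ 0 := sub_ne_zero.2 hζ1
  have hzb : a ((m - 1) + n) - a (m - 1) = (ζ - 1) * a (m - 1) := by
    have hidx : (m - 1) + n = m + n - 1 := by omega
    rw [hidx, hζ]; ring
  have hprim : IsPrimitiveRoot ζ (p ^ (r + 1)) := primroot_of_order hp hζ1 hζr hrmin
  have hφtot : (p ^ (r + 1)).totient = p ^ r * (p - 1) := by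
    rw [Nat.totient_prime_pow hp (by omega)]
    congr 1
  have hφ1 : 1 ≤ p ^ r * (p - 1) := by
    have h1 : 0 < p ^ r := Nat.pow_pos hp.pos
    have h2 := hp.two_le
    exact Nat.mul_pos h1 (by omega)
  have hassoc : Associated ((ζ - 1) ^ (p ^ r * (p - 1))) ((p : 𝓞 K)) := by
    have h1 := assoc_pow_totient hp hprim
    rw [hφtot] at h1
    have h2 : Associated ((ζ - 1) ^ (p ^ r * (p - 1))) ((1 - ζ) ^ (p ^ r * (p - 1))) :=
      Associated.pow_pow ⟨-1, by simp⟩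
    exact h2.trans h1
  have hpR : (p : 𝓞 K) ≠ 0 := Nat.cast_ne_zero.2 hp.ne_zero
  have hspanp : Ideal.span {(p : 𝓞 K)} = Ideal.span {(ζ - 1) ^ (p ^ r * (p - 1))} :=
    (Ideal.span_singleton_eq_span_singleton.2 hassoc).symm
  have hVw : ∀ q : Ideal (𝓞 K), Prime q → mq q ((p : 𝓞 K)) = (p ^ r * (p - 1)) * mq q (ζ - 1) := by
    intro q hq
    have h1 : mq q ((p : 𝓞 K)) = mq q ((ζ - 1) ^ (p ^ r * (p - 1))) := by
      unfold mq
      rw [hspanp]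
    rw [h1, mq_pow hq hz0]
  have hchain : ∀ q : Ideal (𝓞 K), Prime q → mq q (a n) * d ^ (m - 1) = mq q (ζ - 1) :=
    fun q hq => chain_eq hp he hd ha0 haS hm hn hper hnmin hmmin hndvd hq hz0 hzb hpR hφ1 (hVw q hq)
  intro i hi
  constructor
  · intro hni
    have hKpos : 1 ≤ i / n := Nat.div_pos (Nat.le_of_dvd (by omega) hni) (by omega)
    have hKi : i / n * n = i := Nat.div_mul_cancel hni
    apply ideal_eq_of_mult (pow_ne_zero _ (span_ne _ (hane i hi))) (span_ne _ hpR)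
    intro q hq
    rw [Ideal.span_singleton_pow]
    show mq q (a i ^ (p ^ r * (p - 1) * d ^ (m - 1))) = mq q ((p : 𝓞 K))
    rw [mq_pow hq (hane i hi), hVw q hq]
    have h2 : mq q (a i) = mq q (a n) := by
      have := mq_multiple hd2 ha0 haS hm hn hper hnmin hmmin hq (K := i / n) hKpos
      rwa [hKi] at this
    rw [h2, ← hchain q hq]
    ring
  · intro hni
    rw [Ideal.span_singleton_eq_top]
    apply isUnit_of_mq _ (hane i hi)
    intro q hq
    by_contra hc
    have h1 : 1 ≤ mq q (a i) := by omega
    exact no_prime_outside hd2 ha0 haS hm hn hper hnmin hmmin hq hi hni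
      ((mq_pos_iff hq (hane i hi)).1 h1)
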